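/- Let A and B be Hermitian n×n complex matrices, T ≥ 0, and k ≥ 0 an integer. With B_I(t) = e^{iAt} B e^{−iAt}, D_0 = I, and D_m = ∫_{0 ≤ t_m ≤ ⋯ ≤ t_1 ≤ T} B_I(t_1) ⋯ B_I(t_m) dt_1 ⋯ dt_m, the error of the k-th order Dyson truncation satisfies ‖ e^{−i(A+B)T} − e^{−iAT} Σ_{m=0}^{k} (−i)^m D_m ‖ ≤ e^{‖B‖T} (‖B‖T)^{k+1} / (k+1)!, where ‖·‖ is the operator (spectral) norm. -/

import Mathlib

open Matrix MeasureTheory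
open scoped Matrix.Norms.L2Operator

/-- The interaction-picture operator `B_I(t) = e^{iAt} B e^{−iAt}`. -/
noncomputable def interactionPicture {n : ℕ} (A B : Matrix (Fin n) (Fin n) ℂ) (t : ℝ) :
    Matrix (Fin n) (Fin n) ℂ :=
  NormedSpace.exp ((Complex.I * (t : ℂ)) • A) * B *
    NormedSpace.exp ((-(Complex.I * (t : ℂ))) • A)

/-- The ordered simplex `{(t_1, …, t_m) : 0 ≤ t_m ≤ ⋯ ≤ t_1 ≤ T}`. -/
def orderedSimplex (m : ℕ) (T : ℝ) : Set (Fin m → ℝ) :=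
  {t | (∀ i, t i ∈ Set.Icc 0 T) ∧ ∀ i j : Fin m, i ≤ j → t j ≤ t i}

/-- The `m`-th Dyson term
`D_m = ∫_{0 ≤ t_m ≤ ⋯ ≤ t_1 ≤ T} B_I(t_1) ⋯ B_I(t_m) dt_1 ⋯ dt_m` (with `D_0 = I`). -/
noncomputable def dysonTerm {n : ℕ} (A B : Matrix (Fin n) (Fin n) ℂ) (T : ℝ) (m : ℕ) :
    Matrix (Fin n) (Fin n) ℂ :=
  ∫ t in orderedSimplex m T,
    (List.ofFn fun i : Fin m => interactionPicture A B (t i)).prod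

noncomputable instance matQNormedAlgebra {n : ℕ} : NormedAlgebra ℚ (Matrix (Fin n) (Fin n) ℂ) :=
  { (inferInstance : Algebra ℚ (Matrix (Fin n) (Fin n) ℂ)) with
    norm_smul_le := fun q x => by
      rw [← algebraMap_smul ℂ q x]
      exact (norm_smul_le _ _).trans_eq (by simp; left; rfl) }

namespace DysonAux

open NormedSpace

variable {n : ℕ}

local notation "𝕄" => Matrix (Fin n) (Fin n) ℂ

lemma continuous_expLine (c : ℂ) (A : 𝕄) :
    Continuous fun t : ℝ => exp ((c * (t : ℂ)) • A) :=
  exp_continuous.comp ((continuous_const.mul Complex.continuous_ofReal).smul continuous_const)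

lemma continuous_iP (A B : 𝕄) : Continuous fun t : ℝ => interactionPicture A B t := by
  unfold interactionPicture
  exact ((continuous_expLine Complex.I A).mul continuous_const).mul
    (by simpa only [neg_mul] using continuous_expLine (-Complex.I) A)

lemma exp_skew_star_mul {S : 𝕄} (hS : star S = -S) : star (exp S) * exp S = 1 := by
  rw [star_exp, hS, ← exp_add_of_commute (Commute.refl S).neg_left, neg_add_cancel, exp_zero]

lemma exp_skew_mul_star {S : 𝕄} (hS : star S = -S) : exp S * star (exp S) = 1 := by
  rw [star_exp, hS, ← exp_add_of_commute (Commute.refl S).neg_right, add_neg_cancel, exp_zero]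

lemma norm_unitary_mul {U : 𝕄} (hU : star U * U = 1) (X : 𝕄) : ‖U * X‖ = ‖X‖ := by
  have h : star (U * X) * (U * X) = star X * X := by
    rw [StarMul.star_mul, mul_assoc, ← mul_assoc (star U) U X, hU, one_mul]
  have h2 := CStarRing.norm_star_mul_self (x := U * X)
  rw [h, CStarRing.norm_star_mul_self] at h2
  exact ((mul_self_inj_of_nonneg (norm_nonneg _) (norm_nonneg _)).1 h2).symm

lemma norm_mul_unitary {U : 𝕄} (hU : U * star U = 1) (X : 𝕄) : ‖X * U‖ = ‖X‖ := by
  have h : (X * U) * star (X * U) = X * star X := by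
    rw [StarMul.star_mul, mul_assoc, ← mul_assoc U (star U) (star X), hU, one_mul]
  have h2 := CStarRing.norm_self_mul_star (x := X * U)
  rw [h, CStarRing.norm_self_mul_star] at h2
  exact ((mul_self_inj_of_nonneg (norm_nonneg _) (norm_nonneg _)).1 h2).symm

lemma skew_of_hermitian {H : 𝕄} (hH : H.IsHermitian) (t : ℝ) :
    star ((Complex.I * (t : ℂ)) • H) = -((Complex.I * (t : ℂ)) • H) := by
  rw [star_smul]
  rw [show (star H : 𝕄) = H from hH]
  rw [show star (Complex.I * (t : ℂ)) = -(Complex.I * (t : ℂ)) by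
    simp [Complex.star_def, Complex.conj_ofReal], neg_smul]

lemma norm_iP {A : 𝕄} (hA : A.IsHermitian) (B : 𝕄) (t : ℝ) :
    ‖interactionPicture A B t‖ = ‖B‖ := by
  have hS := skew_of_hermitian hA t
  have hstar : exp ((-(Complex.I * (t : ℂ))) • A) = star (exp ((Complex.I * (t : ℂ)) • A)) := by
    rw [star_exp, hS, neg_smul]
  rw [interactionPicture, hstar, mul_assoc, norm_unitary_mul (exp_skew_star_mul hS),
    norm_mul_unitary (by rw [star_star]; exact exp_skew_star_mul hS)]

/-- The interaction-picture propagator `W(t) = e^{iAt} e^{-i(A+B)t}`. -/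
noncomputable def Wt (A B : 𝕄) (t : ℝ) : 𝕄 :=
  exp ((Complex.I * (t : ℂ)) • A) * exp ((-(Complex.I * (t : ℂ))) • (A + B))

lemma continuous_Wt (A B : 𝕄) : Continuous (Wt A B) :=
  (continuous_expLine Complex.I A).mul
    (by simpa only [neg_mul] using continuous_expLine (-Complex.I) (A + B))

lemma norm_Wt_le {A B : 𝕄} (hA : A.IsHermitian) (hB : B.IsHermitian) (t : ℝ) :
    ‖Wt A B t‖ ≤ 1 := by
  rcases Nat.eq_zero_or_pos n with hn | hn
  · subst hn
    simp [Subsingleton.elim (Wt A B t) 0]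
  · haveI : Nonempty (Fin n) := ⟨⟨0, hn⟩⟩
    have hS := skew_of_hermitian hA t
    have hS' : star ((-(Complex.I * (t : ℂ))) • (A + B)) = -((-(Complex.I * (t : ℂ))) • (A + B)) := by
      rw [neg_smul, star_neg, skew_of_hermitian (hA.add hB) t]
    have h1 : ‖Wt A B t‖ = ‖exp ((-(Complex.I * (t : ℂ))) • (A + B))‖ :=
      norm_unitary_mul (exp_skew_star_mul hS) _
    have h2 := norm_unitary_mul (exp_skew_star_mul hS') (1 : 𝕄)
    rw [mul_one] at h2
    rw [h1, h2, CStarRing.norm_one]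

lemma line_smul (c : ℂ) (X : 𝕄) (t : ℝ) : (c * (t : ℂ)) • X = t • (c • X) := by
  rw [mul_comm, mul_smul, Complex.coe_smul]

lemma hasDerivAt_Wt (A B : 𝕄) (t : ℝ) :
    HasDerivAt (Wt A B) ((-Complex.I) • (interactionPicture A B t * Wt A B t)) t := by
  set M : 𝕄 := Complex.I • A with hM
  set N : 𝕄 := (-Complex.I) • (A + B) with hN
  have hM' : HasDerivAt (fun u : ℝ => exp (u • M)) (exp (t • M) * M) t := by
    exact hasDerivAt_exp_smul_const _ t
  have hN' : HasDerivAt (fun u : ℝ => exp (u • N)) (exp (t • N) * N) t := by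
    exact hasDerivAt_exp_smul_const _ t
  have hfun : Wt A B = fun u : ℝ => exp (u • M) * exp (u • N) := by
    funext u
    rw [Wt, line_smul, show (-(Complex.I * (u : ℂ))) • (A + B) = u • N by
      rw [← line_smul, neg_mul]]
  have h : HasDerivAt (fun u : ℝ => exp (u • M) * exp (u • N)) _ t := hM'.mul hN'
  rw [← hfun] at h
  convert h using 1
  -- value equality
  have hinv : exp (-(t • M)) * exp (t • M) = 1 := by
    rw [← exp_add_of_commute (Commute.refl (t • M)).neg_left, neg_add_cancel, exp_zero]
  have hiPW : interactionPicture A B t * Wt A B t = exp (t • M) * B * exp (t • N) := by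
    rw [interactionPicture]
    simp only [hfun]
    have e1 : (Complex.I * (t : ℂ)) • A = t • M := by rw [line_smul]
    have e2 : (-(Complex.I * (t : ℂ))) • A = -(t • M) := by
      rw [neg_smul, e1]
    rw [e1, e2, mul_assoc (exp (t • M) * B), ← mul_assoc (exp (-(t • M))), hinv, one_mul]
  rw [hiPW]
  have hcomm : exp (t • N) * N = N * exp (t • N) :=
    (((Commute.refl N).smul_left t).exp_left).eq
  rw [hcomm, ← mul_assoc]
  have : exp (t • M) * M * exp (t • N) + exp (t • M) * N * exp (t • N)
      = exp (t • M) * (M + N) * exp (t • N) := by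
    rw [mul_add, add_mul]
  rw [this]
  have hMN : M + N = (-Complex.I) • B := by
    rw [hM, hN, smul_add, neg_smul, neg_smul]
    abel
  rw [hMN, mul_smul_comm, smul_mul_assoc]

lemma Wt_integral (A B : 𝕄) (T : ℝ) (hT : 0 ≤ T) :
    Wt A B T = 1 + ∫ s in Set.Icc (0:ℝ) T, (-Complex.I) • (interactionPicture A B s * Wt A B s) := by
  have hcont : Continuous fun s : ℝ => (-Complex.I) • (interactionPicture A B s * Wt A B s) :=
    ((continuous_iP A B).mul (continuous_Wt A B)).const_smul (-Complex.I)
  have h := intervalIntegral.integral_eq_sub_of_hasDerivAt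
    (f := Wt A B) (f' := fun s => (-Complex.I) • (interactionPicture A B s * Wt A B s))
    (fun x _ => hasDerivAt_Wt A B x) (hcont.intervalIntegrable 0 T)
  have hW0 : Wt A B 0 = 1 := by
    simp [Wt]
  rw [hW0] at h
  rw [intervalIntegral.integral_of_le hT, ← MeasureTheory.integral_Icc_eq_integral_Ioc] at h
  rw [h]; abel

end DysonAux

namespace DysonAux2

open NormedSpace DysonAux

variable {n : ℕ}

local notation "𝕄" => Matrix (Fin n) (Fin n) ℂ

lemma isClosed_orderedSimplex (m : ℕ) (T : ℝ) : IsClosed (orderedSimplex m T) := by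
  have h : orderedSimplex m T =
      (⋂ i : Fin m, {t : Fin m → ℝ | t i ∈ Set.Icc 0 T}) ∩
        ⋂ i : Fin m, ⋂ j : Fin m, {t : Fin m → ℝ | i ≤ j → t j ≤ t i} := by
    ext t
    simp only [orderedSimplex, Set.mem_inter_iff, Set.mem_iInter, Set.mem_setOf_eq]
  rw [h]
  refine IsClosed.inter (isClosed_iInter fun i => ?_)
    (isClosed_iInter fun i => isClosed_iInter fun j => ?_)
  · exact IsClosed.preimage (continuous_apply i) isClosed_Icc
  · by_cases hij : i ≤ j
    · simp only [hij, true_implies]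
      exact isClosed_le (continuous_apply j) (continuous_apply i)
    · simp only [hij, false_implies, Set.setOf_true]
      exact isClosed_univ

lemma isCompact_orderedSimplex (m : ℕ) (T : ℝ) : IsCompact (orderedSimplex m T) :=
  IsCompact.of_isClosed_subset (isCompact_univ_pi fun _ => isCompact_Icc)
    (isClosed_orderedSimplex m T) (fun t ht => Set.mem_univ_pi.2 fun i => ht.1 i)

lemma continuous_prodFn (A B : 𝕄) (m : ℕ) :
    Continuous fun t : Fin m → ℝ =>
      (List.ofFn fun i : Fin m => interactionPicture A B (t i)).prod := by
  simp only [List.ofFn_eq_map]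
  exact continuous_list_prod _ fun i _ => (continuous_iP A B).comp (continuous_apply i)

lemma integrableOn_prodFn (A B : 𝕄) (m : ℕ) (T : ℝ) :
    IntegrableOn (fun t : Fin m → ℝ =>
      (List.ofFn fun i : Fin m => interactionPicture A B (t i)).prod)
      (orderedSimplex m T) :=
  (continuous_prodFn A B m).continuousOn.integrableOn_compact (isCompact_orderedSimplex m T)

lemma orderedSimplex_zero (T : ℝ) : orderedSimplex 0 T = Set.univ := by
  ext t
  simp [orderedSimplex]

lemma dysonTerm_zero (A B : 𝕄) (T : ℝ) : dysonTerm A B T 0 = 1 := by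
  rw [dysonTerm, orderedSimplex_zero]
  simp only [List.ofFn_zero, List.prod_nil]
  rw [Measure.restrict_univ, integral_const, volume_pi, measureReal_def, Measure.pi_univ]
  simp

lemma insertNth_mem_orderedSimplex {m : ℕ} {T : ℝ} (s : ℝ) (u : Fin m → ℝ) :
    Fin.insertNth (α := fun _ => ℝ) 0 s u ∈ orderedSimplex (m + 1) T ↔
      s ∈ Set.Icc 0 T ∧ u ∈ orderedSimplex m s := by
  have hsucc : ∀ j : Fin m, Fin.insertNth (α := fun _ => ℝ) 0 s u j.succ = u j := by
    intro j
    simp only [Fin.insertNth_zero', Fin.cons_succ]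
  have hzero : Fin.insertNth (α := fun _ => ℝ) 0 s u 0 = s := by
    simp only [Fin.insertNth_zero', Fin.cons_zero]
  constructor
  · rintro ⟨h1, h2⟩
    refine ⟨by simpa [hzero] using h1 0, fun i => ?_, fun i j hij => ?_⟩
    · constructor
      · have := (h1 i.succ).1; rwa [hsucc] at this
      · have := h2 0 i.succ (Fin.zero_le _); rwa [hzero, hsucc] at this
    · have := h2 i.succ j.succ (Fin.succ_le_succ_iff.2 hij)
      rwa [hsucc, hsucc] at this
  · rintro ⟨hs, hu⟩
    constructor
    · intro i
      rcases Fin.eq_zero_or_eq_succ i with rfl | ⟨i', rfl⟩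
      · rw [hzero]; exact hs
      · rw [hsucc]; exact ⟨(hu.1 i').1, le_trans (hu.1 i').2 hs.2⟩
    · intro i j hij
      rcases Fin.eq_zero_or_eq_succ i with rfl | ⟨i', rfl⟩
      · rcases Fin.eq_zero_or_eq_succ j with rfl | ⟨j', rfl⟩
        · exact le_refl _
        · rw [hzero, hsucc]
          exact (hu.1 j').2
      · rcases Fin.eq_zero_or_eq_succ j with rfl | ⟨j', rfl⟩
        · exact absurd hij (by simp [Fin.le_zero_iff, Fin.succ_ne_zero])
        · rw [hsucc, hsucc]
          exact hu.2 i' j' (Fin.succ_le_succ_iff.1 hij)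

/-- The set `S' = {(s, u) | s ∈ [0,T], u ∈ simplex(s)}`. -/
def simplexPair (m : ℕ) (T : ℝ) : Set (ℝ × (Fin m → ℝ)) :=
  {p | p.1 ∈ Set.Icc 0 T ∧ p.2 ∈ orderedSimplex m p.1}

lemma isClosed_simplexPair (m : ℕ) (T : ℝ) : IsClosed (simplexPair m T) := by
  have h : simplexPair m T =
      ((fun p : ℝ × (Fin m → ℝ) => p.1) ⁻¹' Set.Icc 0 T) ∩
        ((⋂ i : Fin m, {p : ℝ × (Fin m → ℝ) | 0 ≤ p.2 i ∧ p.2 i ≤ p.1}) ∩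
          ⋂ i : Fin m, ⋂ j : Fin m, {p : ℝ × (Fin m → ℝ) | i ≤ j → p.2 j ≤ p.2 i}) := by
    ext p
    simp only [simplexPair, orderedSimplex, Set.mem_inter_iff, Set.mem_iInter,
      Set.mem_setOf_eq, Set.mem_preimage, Set.mem_Icc]
  rw [h]
  have hc2 : ∀ i : Fin m, Continuous fun p : ℝ × (Fin m → ℝ) => p.2 i :=
    fun i => (continuous_apply i).comp continuous_snd
  refine IsClosed.inter (IsClosed.preimage continuous_fst isClosed_Icc)
    (IsClosed.inter (isClosed_iInter fun i => IsClosed.inter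
        (isClosed_le continuous_const (hc2 i)) (isClosed_le (hc2 i) continuous_fst))
      (isClosed_iInter fun i => isClosed_iInter fun j => ?_))
  by_cases hij : i ≤ j
  · simp only [hij, true_implies]
    exact isClosed_le (hc2 j) (hc2 i)
  · simp only [hij, false_implies, Set.setOf_true]
    exact isClosed_univ

lemma isCompact_simplexPair (m : ℕ) (T : ℝ) : IsCompact (simplexPair m T) := by
  refine IsCompact.of_isClosed_subset
    (IsCompact.prod (isCompact_Icc (a := (0:ℝ)) (b := T))
      (isCompact_univ_pi fun _ : Fin m => isCompact_Icc (a := (0:ℝ)) (b := T)))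
    (isClosed_simplexPair m T) ?_
  rintro ⟨s, u⟩ ⟨hs, hu⟩
  exact ⟨hs, Set.mem_univ_pi.2 fun i =>
    ⟨(hu.1 i).1, le_trans (hu.1 i).2 hs.2⟩⟩

lemma dysonTerm_succ (A B : 𝕄) (T : ℝ) (m : ℕ) :
    dysonTerm A B T (m + 1) =
        ∫ s in Set.Icc (0 : ℝ) T, interactionPicture A B s * dysonTerm A B s m ∧
      IntegrableOn (fun s => interactionPicture A B s * dysonTerm A B s m)
        (Set.Icc (0 : ℝ) T) := by
  classical
  set G : (Fin m → ℝ) → 𝕄 :=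
    fun u => (List.ofFn fun i : Fin m => interactionPicture A B (u i)).prod with hG
  set e : (ℝ × (Fin m → ℝ)) ≃ᵐ (Fin (m + 1) → ℝ) :=
    (MeasurableEquiv.piFinSuccAbove (fun _ : Fin (m + 1) => ℝ) 0).symm with he
  have hem : MeasurePreserving e :=
    (volume_preserving_piFinSuccAbove (fun _ : Fin (m + 1) => ℝ) 0).symm _
  have he_apply : ∀ p : ℝ × (Fin m → ℝ),
      e p = Fin.insertNth (α := fun _ => ℝ) 0 p.1 p.2 := fun p => rfl
  have hS'meas : MeasurableSet (simplexPair m T) := (isClosed_simplexPair m T).measurableSet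
  have hpre : e ⁻¹' (orderedSimplex (m + 1) T) = simplexPair m T := by
    ext p
    rw [Set.mem_preimage, he_apply, insertNth_mem_orderedSimplex]
    rfl

  -- value of F at e p
  have hFe : ∀ p : ℝ × (Fin m → ℝ),
      (List.ofFn fun i : Fin (m + 1) => interactionPicture A B (e p i)).prod =
        interactionPicture A B p.1 * G p.2 := by
    intro p
    rw [List.ofFn_succ, List.prod_cons, he_apply]
    simp only [Fin.insertNth_zero', Fin.cons_succ, Fin.cons_zero, hG]
  set H : ℝ × (Fin m → ℝ) → 𝕄 :=
    (simplexPair m T).indicator fun q => interactionPicture A B q.1 * G q.2 with hH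
  have hHint : Integrable H := by
    rw [hH, integrable_indicator_iff hS'meas]
    exact (((continuous_iP A B).comp continuous_fst).mul
      ((continuous_prodFn A B m).comp continuous_snd)).continuousOn.integrableOn_compact
      (isCompact_simplexPair m T)
  have hstep1 : dysonTerm A B T (m + 1) = ∫ p, H p := by
    rw [dysonTerm, ← hem.setIntegral_preimage_emb e.measurableEmbedding, hpre, hH,
      integral_indicator hS'meas]
    exact setIntegral_congr_fun hS'meas fun p _ => hFe p
  have hinner : ∀ s : ℝ, (∫ u, H (s, u)) =
      Set.indicator (Set.Icc (0 : ℝ) T)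
        (fun s => interactionPicture A B s * dysonTerm A B s m) s := by
    intro s
    by_cases hs : s ∈ Set.Icc (0 : ℝ) T
    · have hfun : (fun u => H (s, u)) =
          (orderedSimplex m s).indicator fun u => interactionPicture A B s * G u := by
        funext u
        by_cases hu : u ∈ orderedSimplex m s
        · rw [hH, Set.indicator_of_mem (show (s, u) ∈ simplexPair m T from ⟨hs, hu⟩),
            Set.indicator_of_mem hu]
        · rw [hH, Set.indicator_of_notMem (fun hmem => hu hmem.2),
            Set.indicator_of_notMem hu]
      rw [hfun, integral_indicator (isClosed_orderedSimplex m s).measurableSet,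
        Set.indicator_of_mem hs, dysonTerm]
      exact ((ContinuousLinearMap.mul ℂ 𝕄 (interactionPicture A B s)).integral_comp_comm
        (integrableOn_prodFn A B m s))
    · have hfun : (fun u => H (s, u)) = fun _ => (0 : 𝕄) := by
        funext u
        rw [hH, Set.indicator_of_notMem (fun hmem => hs hmem.1)]
      rw [hfun, integral_zero, Set.indicator_of_notMem hs]
  have hfub : (∫ p, H p) = ∫ s, ∫ u, H (s, u) := by
    rw [Measure.volume_eq_prod ℝ (Fin m → ℝ)]
    exact integral_prod H (by rw [← Measure.volume_eq_prod ℝ (Fin m → ℝ)]; exact hHint)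
  have hHint' : Integrable H ((volume : Measure ℝ).prod (volume : Measure (Fin m → ℝ))) := by
    rw [← Measure.volume_eq_prod ℝ (Fin m → ℝ)]; exact hHint
  have hintleft : Integrable fun s => ∫ u, H (s, u) := hHint'.integral_prod_left
  have hinner' : (fun s => ∫ u, H (s, u)) =
      Set.indicator (Set.Icc (0 : ℝ) T)
        (fun s => interactionPicture A B s * dysonTerm A B s m) := funext hinner
  constructor
  · rw [hstep1, hfub, hinner', integral_indicator measurableSet_Icc]
  · rw [← integrable_indicator_iff measurableSet_Icc, ← hinner']
    exact hintleft

end DysonAux2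

namespace DysonAux3

open NormedSpace DysonAux DysonAux2

variable {n : ℕ}

local notation "𝕄" => Matrix (Fin n) (Fin n) ℂ

/-- Partial sum of the Dyson series. -/
noncomputable def Sk (A B : 𝕄) (k : ℕ) (t : ℝ) : 𝕄 :=
  ∑ m ∈ Finset.range (k + 1), (-Complex.I) ^ m • dysonTerm A B t m

lemma skew_neg {H : 𝕄} (hH : H.IsHermitian) (t : ℝ) :
    star ((-(Complex.I * (t : ℂ))) • H) = -((-(Complex.I * (t : ℂ))) • H) := by
  rw [neg_smul, star_neg, skew_of_hermitian hH t]

lemma iP_mul_Sk (A B : 𝕄) (k : ℕ) (s : ℝ) :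
    interactionPicture A B s * Sk A B k s =
      ∑ m ∈ Finset.range (k + 1),
        (-Complex.I) ^ m • (interactionPicture A B s * dysonTerm A B s m) := by
  rw [Sk, Finset.mul_sum]
  exact Finset.sum_congr rfl fun m _ => (mul_smul_comm _ _ _)

set_option maxHeartbeats 1000000 in
lemma integrableOn_smul_iP_dyson (A B : 𝕄) (T : ℝ) (m : ℕ) (c : ℂ) :
    IntegrableOn (fun s => c • (interactionPicture A B s * dysonTerm A B s m))
      (Set.Icc (0 : ℝ) T) :=
  (dysonTerm_succ A B T m).2.smul c

set_option maxHeartbeats 1000000 in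
lemma integrableOn_iP_Sk (A B : 𝕄) (k : ℕ) (T : ℝ) :
    IntegrableOn (fun s => interactionPicture A B s * Sk A B k s) (Set.Icc (0 : ℝ) T) := by
  have h : (fun s => interactionPicture A B s * Sk A B k s) =
      fun s => ∑ m ∈ Finset.range (k + 1),
        (-Complex.I) ^ m • (interactionPicture A B s * dysonTerm A B s m) :=
    funext fun s => iP_mul_Sk A B k s
  rw [h]
  exact integrable_finset_sum _ fun m _ => integrableOn_smul_iP_dyson A B T m _

set_option maxHeartbeats 1000000 in
lemma integrableOn_smul_iP_Sk (A B : 𝕄) (k : ℕ) (T : ℝ) :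
    IntegrableOn (fun s => (-Complex.I) • (interactionPicture A B s * Sk A B k s))
      (Set.Icc (0 : ℝ) T) := by
  have h : (fun s => (-Complex.I) • (interactionPicture A B s * Sk A B k s)) =
      fun s => ∑ m ∈ Finset.range (k + 1),
        ((-Complex.I) * (-Complex.I) ^ m) • (interactionPicture A B s * dysonTerm A B s m) := by
    funext s
    rw [iP_mul_Sk, Finset.smul_sum]
    exact Finset.sum_congr rfl fun m _ => (smul_smul _ _ _)
  rw [h]
  exact integrable_finset_sum _ fun m _ => integrableOn_smul_iP_dyson A B T m _

set_option maxHeartbeats 1000000 in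
lemma Sk_succ_eq (A B : 𝕄) (k : ℕ) (T : ℝ) :
    Sk A B (k + 1) T = 1 + ∫ s in Set.Icc (0 : ℝ) T,
      (-Complex.I) • (interactionPicture A B s * Sk A B k s) := by
  rw [Sk, Finset.sum_range_succ']
  simp only [pow_zero, one_smul, dysonTerm_zero]
  have h1 : ∀ m, (-Complex.I) ^ (m + 1) • dysonTerm A B T (m + 1) =
      ∫ s in Set.Icc (0 : ℝ) T,
        (-Complex.I) ^ (m + 1) • (interactionPicture A B s * dysonTerm A B s m) := by
    intro m
    rw [(dysonTerm_succ A B T m).1, ← integral_smul]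
  have h2 : (∑ m ∈ Finset.range (k + 1), (-Complex.I) ^ (m + 1) • dysonTerm A B T (m + 1)) =
      ∫ s in Set.Icc (0 : ℝ) T, ∑ m ∈ Finset.range (k + 1),
        (-Complex.I) ^ (m + 1) • (interactionPicture A B s * dysonTerm A B s m) :=
    calc (∑ m ∈ Finset.range (k + 1), (-Complex.I) ^ (m + 1) • dysonTerm A B T (m + 1))
        = ∑ m ∈ Finset.range (k + 1), ∫ s in Set.Icc (0 : ℝ) T,
            (-Complex.I) ^ (m + 1) • (interactionPicture A B s * dysonTerm A B s m) :=
          Finset.sum_congr rfl fun m _ => h1 m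
      _ = _ := (integral_finset_sum (μ := volume.restrict (Set.Icc (0 : ℝ) T))
            (f := fun m s =>
              (-Complex.I) ^ (m + 1) • (interactionPicture A B s * dysonTerm A B s m))
            (Finset.range (k + 1))
            (fun m _ => integrableOn_smul_iP_dyson A B T m _)).symm
  rw [h2, add_comm]
  congr 1
  refine integral_congr_ae (Filter.Eventually.of_forall fun s => ?_)
  dsimp only
  rw [iP_mul_Sk, Finset.smul_sum]
  exact Finset.sum_congr rfl fun m _ => by rw [smul_smul, pow_succ, mul_comm]

lemma norm_setIntegral_le {f : ℝ → 𝕄} {g : ℝ → ℝ} {T : ℝ}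
    (hg : IntegrableOn g (Set.Icc (0 : ℝ) T))
    (hbound : ∀ s ∈ Set.Icc (0 : ℝ) T, ‖f s‖ ≤ g s) :
    ‖∫ s in Set.Icc (0 : ℝ) T, f s‖ ≤ ∫ s in Set.Icc (0 : ℝ) T, g s :=
  norm_integral_le_of_norm_le hg
    ((ae_restrict_iff' measurableSet_Icc).2 (Filter.Eventually.of_forall hbound))

lemma integral_C_pow (C T : ℝ) (hT : 0 ≤ T) (k : ℕ) :
    ∫ s in Set.Icc (0 : ℝ) T, C * s ^ k = C * (T ^ (k + 1) / (k + 1)) := by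
  rw [MeasureTheory.integral_Icc_eq_integral_Ioc, ← intervalIntegral.integral_of_le hT,
    intervalIntegral.integral_const_mul, integral_pow]
  norm_num

set_option maxHeartbeats 1000000 in
lemma key (A B : 𝕄) (hA : A.IsHermitian) (hB : B.IsHermitian) (k : ℕ) :
    ∀ T : ℝ, 0 ≤ T →
      ‖Wt A B T - Sk A B k T‖ ≤ (‖B‖ * T) ^ (k + 1) / (k + 1).factorial := by
  induction k with
  | zero =>
    intro T hT
    have h0 : Sk A B 0 T = 1 := by
      simp [Sk, dysonTerm_zero]
    rw [h0, Wt_integral A B T hT, add_sub_cancel_left]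
    have hb : ∀ s ∈ Set.Icc (0 : ℝ) T,
        ‖(-Complex.I) • (interactionPicture A B s * Wt A B s)‖ ≤ ‖B‖ * s ^ 0 := by
      intro s _
      rw [norm_smul, norm_neg, Complex.norm_I, one_mul, pow_zero, mul_one]
      calc ‖interactionPicture A B s * Wt A B s‖
          ≤ ‖interactionPicture A B s‖ * ‖Wt A B s‖ := norm_mul_le _ _
        _ ≤ ‖B‖ * 1 := by
            rw [norm_iP hA]
            exact mul_le_mul_of_nonneg_left (norm_Wt_le hA hB s) (norm_nonneg B)
        _ = ‖B‖ := mul_one _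
    refine le_trans (norm_setIntegral_le (g := fun s => ‖B‖ * s ^ 0)
      ((continuous_const.mul (continuous_pow 0)).continuousOn.integrableOn_compact
        isCompact_Icc) hb) ?_
    rw [integral_C_pow ‖B‖ T hT 0]
    simp
  | succ k ih =>
    intro T hT
    have hintW : IntegrableOn
        (fun s => (-Complex.I) • (interactionPicture A B s * Wt A B s)) (Set.Icc (0 : ℝ) T) :=
      ((((continuous_iP A B).mul (continuous_Wt A B)).const_smul
        (-Complex.I)).continuousOn).integrableOn_compact isCompact_Icc
    have hintS : IntegrableOn
        (fun s => (-Complex.I) • (interactionPicture A B s * Sk A B k s)) (Set.Icc (0 : ℝ) T) :=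
      integrableOn_smul_iP_Sk A B k T
    have hrec : Wt A B T - Sk A B (k + 1) T = ∫ s in Set.Icc (0 : ℝ) T,
        (-Complex.I) • (interactionPicture A B s * (Wt A B s - Sk A B k s)) := by
      rw [Wt_integral A B T hT, Sk_succ_eq A B k T, add_sub_add_left_eq_sub,
        ← integral_sub hintW hintS]
      refine integral_congr_ae (Filter.Eventually.of_forall fun s => ?_)
      dsimp only
      rw [← smul_sub, ← mul_sub]
    rw [hrec]
    have hb : ∀ s ∈ Set.Icc (0 : ℝ) T,
        ‖(-Complex.I) • (interactionPicture A B s * (Wt A B s - Sk A B k s))‖ ≤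
          (‖B‖ ^ (k + 2) / (k + 1).factorial) * s ^ (k + 1) := by
      intro s hs
      rw [norm_smul, norm_neg, Complex.norm_I, one_mul]
      calc ‖interactionPicture A B s * (Wt A B s - Sk A B k s)‖
          ≤ ‖interactionPicture A B s‖ * ‖Wt A B s - Sk A B k s‖ := norm_mul_le _ _
        _ ≤ ‖B‖ * ((‖B‖ * s) ^ (k + 1) / (k + 1).factorial) := by
            rw [norm_iP hA]
            exact mul_le_mul_of_nonneg_left (ih s hs.1) (norm_nonneg B)
        _ = (‖B‖ ^ (k + 2) / (k + 1).factorial) * s ^ (k + 1) := by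
            rw [mul_pow]; ring
    refine le_trans (norm_setIntegral_le (g := fun s => (‖B‖ ^ (k + 2) / (k + 1).factorial) * s ^ (k + 1))
      ((continuous_const.mul (continuous_pow (k + 1))).continuousOn.integrableOn_compact
        isCompact_Icc) hb) ?_
    rw [integral_C_pow _ T hT (k + 1)]
    have h1 : ((k + 1).factorial : ℝ) ≠ 0 := Nat.cast_ne_zero.2 (k + 1).factorial_ne_zero
    have h2 : ((k : ℝ) + 1 + 1) ≠ 0 := by positivity
    rw [mul_pow, Nat.factorial_succ (k + 1)]
    push_cast
    field_simp
    ring_nf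
    exact le_rfl

end DysonAux3

open DysonAux DysonAux2 DysonAux3

/-- **Error of the `k`-th order Dyson truncation.** -/
theorem stmt8 (n : ℕ) (A B : Matrix (Fin n) (Fin n) ℂ)
    (hA : A.IsHermitian) (hB : B.IsHermitian) (T : ℝ) (hT : 0 ≤ T) (k : ℕ) :
    ‖NormedSpace.exp ((-(Complex.I * (T : ℂ))) • (A + B))
        - NormedSpace.exp ((-(Complex.I * (T : ℂ))) • A) *
            ∑ m ∈ Finset.range (k + 1), (-Complex.I) ^ m • dysonTerm A B T m‖
      ≤ Real.exp (‖B‖ * T) * (‖B‖ * T) ^ (k + 1) / (k + 1).factorial := by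
  rcases Nat.eq_zero_or_pos n with hn | hn
  · subst hn
    have h0 : (NormedSpace.exp ((-(Complex.I * (T : ℂ))) • (A + B))
        - NormedSpace.exp ((-(Complex.I * (T : ℂ))) • A) *
            ∑ m ∈ Finset.range (k + 1), (-Complex.I) ^ m • dysonTerm A B T m) = 0 :=
      Subsingleton.elim _ _
    rw [h0, norm_zero]
    exact div_nonneg (mul_nonneg (Real.exp_nonneg _)
      (pow_nonneg (mul_nonneg (norm_nonneg _) hT) _)) (Nat.cast_nonneg _)
  · haveI : Nonempty (Fin n) := ⟨⟨0, hn⟩⟩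
    have hU : NormedSpace.exp ((-(Complex.I * (T : ℂ))) • A) *
        NormedSpace.exp ((Complex.I * (T : ℂ)) • A) = 1 := by
      rw [neg_smul,
        ← NormedSpace.exp_add_of_commute (Commute.refl ((Complex.I * (T : ℂ)) • A)).neg_left,
        neg_add_cancel, NormedSpace.exp_zero]
    have key2 : NormedSpace.exp ((-(Complex.I * (T : ℂ))) • (A + B))
        = NormedSpace.exp ((-(Complex.I * (T : ℂ))) • A) * Wt A B T := by
      rw [Wt, ← mul_assoc, hU, one_mul]
    have hSk : (∑ m ∈ Finset.range (k + 1), (-Complex.I) ^ m • dysonTerm A B T m)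
        = Sk A B k T := rfl
    rw [key2, hSk, ← mul_sub, norm_unitary_mul (exp_skew_star_mul (skew_neg hA T))]
    refine le_trans (key A B hA hB k T hT) ?_
    have h1 : (1 : ℝ) ≤ Real.exp (‖B‖ * T) := Real.one_le_exp (mul_nonneg (norm_nonneg B) hT)
    have h2 : (0 : ℝ) < ((k + 1).factorial : ℝ) := Nat.cast_pos.2 (Nat.factorial_pos _)
    have h3 : (0 : ℝ) ≤ (‖B‖ * T) ^ (k + 1) := pow_nonneg (mul_nonneg (norm_nonneg _) hT) _
    calc (‖B‖ * T) ^ (k + 1) / ((k + 1).factorial : ℝ)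
        = 1 * (‖B‖ * T) ^ (k + 1) / ((k + 1).factorial : ℝ) := by rw [one_mul]
      _ ≤ Real.exp (‖B‖ * T) * (‖B‖ * T) ^ (k + 1) / ((k + 1).factorial : ℝ) :=
          (div_le_div_iff_of_pos_right h2).2 (mul_le_mul_of_nonneg_right h1 h3)
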